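/- arXiv:2312.12900 — 2 statements merged into one kernel-verified Lean document; each statement's English description precedes it below -/
import Mathlib

section
/- Let m ∈ ℕ₀ and set λ = 4m(m+1). The complex vector space V = span{P_n^{-m} : n ∈ ℤ, |n| ≤ m} of holomorphic functions on {(z,w) ∈ ℂ² : zw ≠ 1} has dimension 2m+1; i.e., the functions P_{-m}^{-m}, …, P_m^{-m} are linearly independent. -/
open Complex

/-- The complement of the complexified unit circle (affine part). -/
def OmegaStar : Type := {p : ℂ × ℂ // p.1 * p.2 ≠ 1}

/-- Exceptional Poisson Fourier mode `P_n^{-m}` for `|n| ≤ m`, as a holomorphic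
function on `{zw ≠ 1}`. -/
noncomputable def PFM (m : ℕ) (n : ℤ) (p : OmegaStar) : ℂ :=
  (-1 : ℂ) ^ n * (∑ k ∈ Finset.range (m - n.natAbs + 1),
      (Nat.choose m (k + n.natAbs) : ℂ) * (Nat.choose m k : ℂ) *
        p.1.1 ^ (k + (max (-n) 0).toNat) * p.1.2 ^ (k + (max n 0).toNat))
    / (1 - p.1.1 * p.1.2) ^ m

lemma PFM_right_zero_nonpos (m : ℕ) (n : ℤ) (hn : n ≤ 0) (z : ℂ) :
    PFM m n ⟨(z,0), by simp⟩ = (-1:ℂ)^n * (m.choose n.natAbs) * z ^ n.natAbs := by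
  unfold PFM
  have h1 : (max n 0).toNat = 0 := by omega
  have h2 : (max (-n) 0).toNat = n.natAbs := by omega
  rw [h1, h2]
  simp only [mul_zero, sub_zero, one_pow, div_one, add_zero]
  rw [Finset.sum_eq_single 0 (by intro k _ hk; simp [zero_pow hk]) (by simp)]
  simp [mul_assoc]

lemma PFM_right_zero_pos (m : ℕ) (n : ℤ) (hn : 0 < n) (z : ℂ) :
    PFM m n ⟨(z,0), by simp⟩ = 0 := by
  unfold PFM
  have h1 : (max n 0).toNat = n.natAbs := by omega
  simp only
  rw [Finset.sum_eq_zero]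
  · simp
  · intro k _
    rw [h1]
    have : k + n.natAbs ≠ 0 := by omega
    simp [zero_pow this]

lemma PFM_neg_swap (m : ℕ) (n : ℤ) (z w : ℂ) (h : z * w ≠ 1) :
    PFM m (-n) ⟨(w,z), by rwa [mul_comm]⟩ = PFM m n ⟨(z,w), h⟩ := by
  unfold PFM
  have e1 : ((-1:ℂ))^(-n) = (-1:ℂ)^n := by
    rw [zpow_neg, ← inv_zpow, inv_neg, inv_one]
  simp only [Int.natAbs_neg, neg_neg, e1]
  rw [mul_comm w z]
  congr 1
  congr 1
  apply Finset.sum_congr rfl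
  intro k _
  ring

lemma key_nonpos (m : ℕ) (g : ℤ → ℂ)
    (h : ∀ z : ℂ, ∑ n ∈ Finset.Icc (-(m:ℤ)) m, g n * PFM m n ⟨(z,0), by simp⟩ = 0) :
    ∀ n ∈ Finset.Icc (-(m:ℤ)) m, n ≤ 0 → g n = 0 := by
  set p : Polynomial ℂ := ∑ j ∈ Finset.range (m+1),
    Polynomial.C (g (-(j:ℤ)) * (-1:ℂ)^(-(j:ℤ)) * (m.choose j)) * Polynomial.X ^ j with hp
  have himg : Finset.Icc (-(m:ℤ)) (0:ℤ) =
      Finset.image (fun j : ℕ => -(j:ℤ)) (Finset.range (m+1)) := by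
    ext n
    simp only [Finset.mem_Icc, Finset.mem_image, Finset.mem_range]
    constructor
    · rintro ⟨h1, h2⟩; exact ⟨n.natAbs, by omega, by omega⟩
    · rintro ⟨j, hj, rfl⟩; omega
  have heval : ∀ z : ℂ, p.eval z = 0 := by
    intro z
    have hz := h z
    rw [hp]
    simp only [Polynomial.eval_finset_sum, Polynomial.eval_mul, Polynomial.eval_C,
      Polynomial.eval_pow, Polynomial.eval_X]
    have hsplit : ∑ n ∈ Finset.Icc (-(m:ℤ)) m, g n * PFM m n ⟨(z,0), by simp⟩
        = ∑ n ∈ Finset.Icc (-(m:ℤ)) (0:ℤ),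
            g n * ((-1:ℂ)^n * (m.choose n.natAbs) * z ^ n.natAbs) := by
      rw [← Finset.sum_subset (Finset.Icc_subset_Icc_right (by positivity))]
      · apply Finset.sum_congr rfl
        intro n hn
        rw [PFM_right_zero_nonpos m n (Finset.mem_Icc.mp hn).2]
      · intro n hn hn'
        simp only [Finset.mem_Icc] at hn hn'
        rw [PFM_right_zero_pos m n (by omega), mul_zero]
    rw [hsplit, himg, Finset.sum_image (by intro a _ b _ hab; simpa using hab)] at hz
    rw [← hz]
    apply Finset.sum_congr rfl
    intro j _
    simp only [Int.natAbs_neg, Int.natAbs_natCast]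
    ring
  have hp0 : p = 0 := by
    apply Polynomial.funext
    intro z
    simp [heval z]
  intro n hn hn0
  have hj : n.natAbs < m + 1 := by
    simp only [Finset.mem_Icc] at hn; omega
  have hc : p.coeff n.natAbs = g (-(n.natAbs:ℤ)) * (-1:ℂ)^(-(n.natAbs:ℤ)) * (m.choose n.natAbs) := by
    rw [hp, Polynomial.finset_sum_coeff]
    rw [Finset.sum_eq_single n.natAbs]
    · rw [Polynomial.coeff_C_mul, Polynomial.coeff_X_pow, if_pos rfl, mul_one]
    · intro j _ hj'
      rw [Polynomial.coeff_C_mul, Polynomial.coeff_X_pow, if_neg (Ne.symm hj'), mul_zero]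
    · intro habs
      exact absurd (Finset.mem_range.mpr hj) habs
  rw [hp0] at hc
  simp only [Polynomial.coeff_zero] at hc
  have hne : n = -(n.natAbs:ℤ) := by omega
  have h1 : ((-1:ℂ))^(-(n.natAbs:ℤ)) ≠ 0 := by
    apply zpow_ne_zero; norm_num
  have h2 : ((m.choose n.natAbs : ℕ) : ℂ) ≠ 0 := by
    exact Nat.cast_ne_zero.mpr (Nat.choose_pos (by omega)).ne'
  rw [hne]
  rcases mul_eq_zero.mp hc.symm with h' | h'
  · rcases mul_eq_zero.mp h' with h'' | h''
    · exact h''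
    · exact absurd h'' h1
  · exact absurd h' h2

lemma key_all (m : ℕ) (g : ℤ → ℂ)
    (h : ∀ p : OmegaStar, ∑ n ∈ Finset.Icc (-(m:ℤ)) m, g n * PFM m n p = 0) :
    ∀ n ∈ Finset.Icc (-(m:ℤ)) m, g n = 0 := by
  have hneg := key_nonpos m g (fun z => h _)
  have hIcc : Finset.Icc (-(m:ℤ)) (m:ℤ) =
      Finset.image (fun n : ℤ => -n) (Finset.Icc (-(m:ℤ)) (m:ℤ)) := by
    ext n
    simp only [Finset.mem_Icc, Finset.mem_image]
    constructor
    · rintro ⟨h1, h2⟩; exact ⟨-n, by omega, by omega⟩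
    · rintro ⟨j, hj, rfl⟩; omega
  have hpos := key_nonpos m (fun n => g (-n)) ?_
  · intro n hn
    rcases le_or_gt n 0 with h0 | h0
    · exact hneg n hn h0
    · have := hpos (-n) (by simp only [Finset.mem_Icc] at hn ⊢; omega) (by omega)
      simpa using this
  · intro z
    have h2 := h ⟨(0, z), by simp⟩
    rw [hIcc, Finset.sum_image (by intro a _ b _ hab; simpa using hab)] at h2
    refine Eq.trans ?_ h2
    apply Finset.sum_congr rfl
    intro n _
    have hsw := PFM_neg_swap m (-n) 0 z (by simp)
    rw [neg_neg] at hsw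
    rw [← hsw]

/-- The functions `P_{-m}^{-m}, …, P_m^{-m}` are linearly independent, and the
space they span has dimension `2m+1`. -/
theorem stmt18 (m : ℕ) :
    LinearIndependent ℂ (fun n : (Finset.Icc (-(m : ℤ)) (m : ℤ)) => PFM m n.1)
    ∧ Module.finrank ℂ
        ↥(Submodule.span ℂ
          (Set.range (fun n : (Finset.Icc (-(m : ℤ)) (m : ℤ)) => PFM m n.1)))
      = 2 * m + 1 := by
  have hli : LinearIndependent ℂ (fun n : (Finset.Icc (-(m : ℤ)) (m : ℤ)) => PFM m n.1) := by
    rw [Fintype.linearIndependent_iff]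
    intro g' hg'
    set g : ℤ → ℂ := fun n => if hn : n ∈ Finset.Icc (-(m:ℤ)) (m:ℤ) then g' ⟨n, hn⟩ else 0 with hgdef
    have hsum : ∀ p : OmegaStar, ∑ n ∈ Finset.Icc (-(m:ℤ)) m, g n * PFM m n p = 0 := by
      intro p
      have := congrFun hg' p
      simp only [Finset.sum_apply, Pi.smul_apply, Pi.zero_apply, smul_eq_mul] at this
      rw [← this, ← Finset.sum_attach (Finset.Icc (-(m:ℤ)) m) (fun n => g n * PFM m n p)]
      apply Finset.sum_congr rfl
      intro i _
      rw [hgdef]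
      simp [i.2]
    have hall := key_all m g hsum
    intro i
    have := hall i.1 i.2
    rw [hgdef] at this
    simpa [i.2] using this
  refine ⟨hli, ?_⟩
  rw [finrank_span_eq_card hli, Fintype.card_coe, Int.card_Icc]
  omega
end

section
/- Let M ∈ ℕ₀ and V = span{ z^j w^k (1-zw)^{-M} : 0 ≤ j, k ≤ M } as a space of holomorphic functions on {(z,w) ∈ ℂ² : zw ≠ 1}. Then dim V = (M+1)², and V equals the span of the Poisson Fourier modes { P_n^{-m} : 0 ≤ m ≤ M, |n| ≤ m }, which is the direct sum over m = 0, …, M of the (2m+1)-dimensional eigenspaces of Δ_{zw} with eigenvalue 4m(m+1). -/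
open Complex

/-- The monomial family `z^j w^k (1-zw)^{-M}`, `0 ≤ j,k ≤ M`. -/
noncomputable def mono (M : ℕ) (jk : Fin (M + 1) × Fin (M + 1)) (p : OmegaStar) : ℂ :=
  p.1.1 ^ (jk.1 : ℕ) * p.1.2 ^ (jk.2 : ℕ) / (1 - p.1.1 * p.1.2) ^ M

namespace Stmt19Aux

open Polynomial

/-! ### Basic exponent bookkeeping -/

def an (n : ℤ) : ℕ := (max (-n) 0).toNat
def bn (n : ℤ) : ℕ := (max n 0).toNat

lemma an_eq (n : ℤ) : an n = (-n).toNat := by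
  unfold an
  rcases le_total (-n) 0 with h | h <;> omega

lemma bn_eq (n : ℤ) : bn n = n.toNat := by
  unfold bn
  rcases le_total n 0 with h | h <;> simp [max_eq_left, max_eq_right, h] <;> omega

lemma an_le (n : ℤ) : an n ≤ n.natAbs := by rw [an_eq]; omega
lemma bn_le (n : ℤ) : bn n ≤ n.natAbs := by rw [bn_eq]; omega

/-! ### Single-variable polynomials -/

noncomputable def fS (m : ℕ) (n : ℤ) : Polynomial ℂ :=
  ∑ k ∈ Finset.range (m - n.natAbs + 1),
    Polynomial.monomial k ((m.choose (k + n.natAbs) : ℂ) * (m.choose k : ℂ))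

noncomputable def gpoly (M m : ℕ) (n : ℤ) : Polynomial ℂ :=
  fS m n * (1 - Polynomial.X) ^ (M - m)

lemma fS_natDegree_le (m : ℕ) (n : ℤ) : (fS m n).natDegree ≤ m - n.natAbs := by
  apply Polynomial.natDegree_sum_le_of_forall_le
  intro k hk
  refine le_trans (Polynomial.natDegree_monomial_le _) ?_
  simp only [Finset.mem_range] at hk; omega

lemma gpoly_natDegree_le (M m : ℕ) (n : ℤ) (hm : m ≤ M) (hn : n.natAbs ≤ m) :
    (gpoly M m n).natDegree ≤ M - n.natAbs := by
  refine le_trans Polynomial.natDegree_mul_le ?_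
  have h1 := fS_natDegree_le m n
  have h2 : ((1 - Polynomial.X : Polynomial ℂ) ^ (M - m)).natDegree ≤ M - m := by
    refine le_trans Polynomial.natDegree_pow_le ?_
    have : (1 - Polynomial.X : Polynomial ℂ).natDegree ≤ 1 := by
      refine le_trans (Polynomial.natDegree_sub_le _ _) ?_
      simp
    nlinarith
  omega

lemma gpoly_coeff_zero (M m : ℕ) (n : ℤ) (hm : m ≤ M) (hn : n.natAbs ≤ m)
    {i : ℕ} (hi : M - n.natAbs + 1 ≤ i) : (gpoly M m n).coeff i = 0 :=
  Polynomial.coeff_eq_zero_of_natDegree_lt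
    (lt_of_le_of_lt (gpoly_natDegree_le M m n hm hn) (by omega))

lemma fS_eval_one (m : ℕ) (n : ℤ) :
    (fS m n).eval 1 = ((∑ k ∈ Finset.range (m - n.natAbs + 1),
      m.choose (k + n.natAbs) * m.choose k : ℕ) : ℂ) := by
  simp [fS, Polynomial.eval_finset_sum]

lemma fS_eval_one_ne (m : ℕ) (n : ℤ) (hn : n.natAbs ≤ m) : (fS m n).eval 1 ≠ 0 := by
  rw [fS_eval_one]
  rw [Nat.cast_ne_zero]
  have h0 : 0 < m.choose (0 + n.natAbs) * m.choose 0 := by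
    simp [Nat.choose_pos hn]
  have : 0 < ∑ k ∈ Finset.range (m - n.natAbs + 1),
      m.choose (k + n.natAbs) * m.choose k := by
    apply Finset.sum_pos' (fun k _ => Nat.zero_le _)
    exact ⟨0, Finset.mem_range.mpr (by omega), h0⟩
  omega

/-! ### The single-variable independence lemma -/

lemma SV (M : ℕ) (n : ℤ) (d : ℕ → ℂ)
    (hd0 : ∀ m, m < n.natAbs → d m = 0)
    (h : ∀ i, ∑ m ∈ Finset.range (M + 1), d m * (gpoly M m n).coeff i = 0) :
    ∀ m, m ≤ M → d m = 0 := by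
  have hpoly : (∑ m ∈ Finset.range (M + 1), Polynomial.C (d m) * gpoly M m n) = 0 := by
    apply Polynomial.ext
    intro i
    rw [Polynomial.finset_sum_coeff]
    simpa [Polynomial.coeff_C_mul] using h i
  have hsum : ∀ m, (Polynomial.C (d m) * gpoly M m n).comp (1 - Polynomial.X)
      = Polynomial.C (d m) * ((fS m n).comp (1 - Polynomial.X) * Polynomial.X ^ (M - m)) := by
    intro m
    rw [Polynomial.mul_comp, Polynomial.C_comp, gpoly, Polynomial.mul_comp,
      Polynomial.pow_comp, Polynomial.sub_comp, Polynomial.one_comp, Polynomial.X_comp,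
      sub_sub_cancel]
  have hcomp : ∑ m ∈ Finset.range (M + 1),
      Polynomial.C (d m) * ((fS m n).comp (1 - Polynomial.X) * Polynomial.X ^ (M - m)) = 0 := by
    have h2 : ∑ m ∈ Finset.range (M + 1),
        (Polynomial.compRingHom (1 - Polynomial.X)) (Polynomial.C (d m) * gpoly M m n) = 0 := by
      rw [← map_sum, hpoly, map_zero]
    simpa [Polynomial.coe_compRingHom_apply, hsum] using h2
  have key : ∀ t : ℕ, ∀ m, m ≤ M → M - m < t → d m = 0 := by
    intro t
    induction t with
    | zero => intro m hm hlt; omega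
    | succ t IH =>
      intro m hm hlt
      rcases lt_or_ge m n.natAbs with hcase | hcase
      · exact hd0 m hcase
      have hco := congrArg (fun p => Polynomial.coeff p (M - m)) hcomp
      simp only [Polynomial.finset_sum_coeff, Polynomial.coeff_zero] at hco
      have hterm : ∀ m' ∈ Finset.range (M + 1), m' ≠ m →
          Polynomial.coeff (Polynomial.C (d m')
            * ((fS m' n).comp (1 - Polynomial.X) * Polynomial.X ^ (M - m'))) (M - m) = 0 := by
        intro m' hm' hne
        simp only [Finset.mem_range] at hm'
        rcases lt_or_ge m' n.natAbs with h1 | h1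
        · rw [hd0 m' h1]; simp
        rcases lt_or_ge m m' with h2 | h2
        · rw [IH m' (by omega) (by omega)]; simp
        · have hx : ¬ (M - m' ≤ M - m) := by omega
          rw [Polynomial.coeff_C_mul, Polynomial.coeff_mul_X_pow', if_neg hx, mul_zero]
      rw [Finset.sum_eq_single_of_mem m (Finset.mem_range.mpr (by omega)) hterm] at hco
      rw [Polynomial.coeff_C_mul, Polynomial.coeff_mul_X_pow', if_pos (le_refl _),
        Nat.sub_self, Polynomial.coeff_zero_eq_eval_zero, Polynomial.eval_comp] at hco
      have h1 : Polynomial.eval 0 (1 - Polynomial.X : Polynomial ℂ) = 1 := by simp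
      rw [h1] at hco
      exact (mul_eq_zero.mp hco).resolve_right (fS_eval_one_ne m n hcase)
  intro m hm
  exact key (M - m + 1) m hm (by omega)

/-! ### Two-variable polynomials and the evaluation map -/

noncomputable def pfmP (M m : ℕ) (n : ℤ) : Polynomial (Polynomial ℂ) :=
  ∑ i ∈ Finset.range (M - n.natAbs + 1),
    Polynomial.monomial (i + an n)
      (Polynomial.monomial (i + bn n) ((-1 : ℂ) ^ n * (gpoly M m n).coeff i))

noncomputable def monoPfam (M : ℕ) (jk : Fin (M + 1) × Fin (M + 1)) :
    Polynomial (Polynomial ℂ) :=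
  Polynomial.monomial (jk.1 : ℕ) (Polynomial.monomial (jk.2 : ℕ) (1 : ℂ))

/-- the evaluation linear map from polynomials to functions on `OmegaStar`. -/
noncomputable def evalP (M : ℕ) : Polynomial (Polynomial ℂ) →ₗ[ℂ] (OmegaStar → ℂ) where
  toFun p := fun q => Polynomial.eval₂ (Polynomial.evalRingHom q.1.2) q.1.1 p
      / (1 - q.1.1 * q.1.2) ^ M
  map_add' p r := by funext q; simp [Polynomial.eval₂_add, add_div]
  map_smul' c p := by
    funext q
    have h : c • p = Polynomial.C c • p := by
      ext i : 1
      simp [Polynomial.coeff_smul, Polynomial.smul_eq_C_mul]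
    simp only [h, Polynomial.eval₂_smul, RingHom.id_apply, Pi.smul_apply, smul_eq_mul]
    simp [mul_div_assoc]

lemma evalP_apply (M : ℕ) (p : Polynomial (Polynomial ℂ)) (q : OmegaStar) :
    evalP M p q = Polynomial.eval₂ (Polynomial.evalRingHom q.1.2) q.1.1 p
      / (1 - q.1.1 * q.1.2) ^ M := rfl

lemma evalP_inj (M : ℕ) : LinearMap.ker (evalP M) = ⊥ := by
  rw [LinearMap.ker_eq_bot']
  intro p hp
  have h0 : ∀ z w : ℂ, z * w ≠ 1 →
      Polynomial.eval₂ (Polynomial.evalRingHom w) z p = 0 := by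
    intro z w hzw
    have hq : evalP M p ⟨(z, w), hzw⟩ = 0 := by rw [hp]; rfl
    change Polynomial.eval₂ (Polynomial.evalRingHom w) z p / (1 - z * w) ^ M = 0 at hq
    have hd : (1 - z * w) ^ M ≠ 0 := pow_ne_zero _ (sub_ne_zero.mpr (Ne.symm hzw))
    exact (div_eq_zero_iff.mp hq).resolve_right hd
  have hw : ∀ w : ℂ, p.map (Polynomial.evalRingHom w) = 0 := by
    intro w
    apply Polynomial.eq_zero_of_infinite_isRoot
    apply Set.Infinite.mono (s := {z : ℂ | z * w ≠ 1})
    · intro z hz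
      have := h0 z w hz
      rwa [Polynomial.eval₂_eq_eval_map] at this
    · have hfin : ({z : ℂ | z * w = 1}).Finite := by
        apply Set.Subsingleton.finite
        intro a ha b hb
        have hw0 : w ≠ 0 := by rintro rfl; simp at ha
        simp only [Set.mem_setOf_eq] at ha hb
        have : a * w = b * w := by rw [ha, hb]
        exact mul_right_cancel₀ hw0 this
      exact hfin.infinite_compl
  ext i j : 2
  have hcoeff : ∀ w : ℂ, (p.coeff i).eval w = 0 := by
    intro w
    have := congrArg (fun q => Polynomial.coeff q i) (hw w)
    simpa [Polynomial.coeff_map] using this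
  have hzero : p.coeff i = 0 := by
    apply Polynomial.funext (q := 0); simpa using hcoeff
  simp [hzero]

/-! ### Evaluation of the families -/

lemma powdiv {D : ℂ} (hD : D ≠ 0) {M m : ℕ} (hm : m ≤ M) (K : ℂ) :
    K * D ^ (M - m) / D ^ M = K / D ^ m := by
  rw [div_eq_div_iff (pow_ne_zero _ hD) (pow_ne_zero _ hD), mul_assoc, ← pow_add,
    show M - m + m = M from by omega]

lemma evalP_pfmP (M m : ℕ) (n : ℤ) (hm : m ≤ M) (hn : n.natAbs ≤ m) :
    evalP M (pfmP M m n) = PFM m n := by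
  funext q
  obtain ⟨⟨z, w⟩, hq⟩ := q
  have hD : (1 - z * w) ≠ 0 := sub_ne_zero.mpr (Ne.symm hq)
  show Polynomial.eval₂ (Polynomial.evalRingHom w) z (pfmP M m n) / (1 - z * w) ^ M = _
  have hnum : Polynomial.eval₂ (Polynomial.evalRingHom w) z (pfmP M m n)
      = (-1 : ℂ) ^ n * (z ^ an n * w ^ bn n * (gpoly M m n).eval (z * w)) := by
    rw [pfmP, Polynomial.eval₂_finset_sum]
    rw [Polynomial.eval_eq_sum_range' (n := M - n.natAbs + 1)
      (lt_of_le_of_lt (gpoly_natDegree_le M m n hm hn) (by omega))]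
    rw [Finset.mul_sum, Finset.mul_sum]
    apply Finset.sum_congr rfl
    intro i _
    simp only [Polynomial.eval₂_monomial, Polynomial.coe_evalRingHom,
      Polynomial.eval_monomial]
    ring
  rw [hnum]
  have hg : (gpoly M m n).eval (z * w) = (fS m n).eval (z * w) * (1 - z * w) ^ (M - m) := by
    simp [gpoly]
  have hfSe : (fS m n).eval (z * w)
      = ∑ k ∈ Finset.range (m - n.natAbs + 1),
        (Nat.choose m (k + n.natAbs) : ℂ) * (Nat.choose m k : ℂ) * (z * w) ^ k := by
    simp [fS, Polynomial.eval_finset_sum]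
  have hPF : PFM m n ⟨(z, w), hq⟩
      = (-1 : ℂ) ^ n * (z ^ an n * w ^ bn n * (fS m n).eval (z * w)) / (1 - z * w) ^ m := by
    delta PFM
    rw [hfSe]
    congr 1
    simp only [Finset.mul_sum]
    apply Finset.sum_congr rfl
    intro k _
    show ((-1 : ℂ) ^ n) * ((Nat.choose m (k + n.natAbs) : ℂ) * (Nat.choose m k : ℂ)
        * z ^ (k + an n) * w ^ (k + bn n)) = _
    rw [pow_add, pow_add, mul_pow]
    ring
  rw [hPF, hg]
  rw [show (-1 : ℂ) ^ n * (z ^ an n * w ^ bn n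
      * ((fS m n).eval (z * w) * (1 - z * w) ^ (M - m)))
    = ((-1 : ℂ) ^ n * (z ^ an n * w ^ bn n * (fS m n).eval (z * w))) * (1 - z * w) ^ (M - m)
    from by ring]
  exact powdiv hD hm _

lemma evalP_monoPfam (M : ℕ) (jk : Fin (M + 1) × Fin (M + 1)) :
    evalP M (monoPfam M jk) = mono M jk := by
  funext q
  obtain ⟨⟨z, w⟩, hq⟩ := q
  show Polynomial.eval₂ (Polynomial.evalRingHom w) z (monoPfam M jk) / (1 - z * w) ^ M = _
  show Polynomial.eval₂ (Polynomial.evalRingHom w) z _ / _ = z ^ (jk.1 : ℕ) * w ^ (jk.2 : ℕ) / _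
  rw [monoPfam, Polynomial.eval₂_monomial]
  simp [mul_comm]

lemma smul_monoPfam (M : ℕ) (j k : ℕ) (hj : j < M + 1) (hk : k < M + 1) (s : ℂ) :
    Polynomial.monomial j (Polynomial.monomial k s)
      = s • monoPfam M (⟨j, hj⟩, ⟨k, hk⟩) := by
  rw [monoPfam, Polynomial.smul_monomial, Polynomial.smul_monomial, smul_eq_mul, mul_one]

lemma pfm_mem_span (M m : ℕ) (n : ℤ) (hm : m ≤ M) (hn : n.natAbs ≤ m) :
    PFM m n ∈ Submodule.span ℂ (Set.range (mono M)) := by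
  rw [← evalP_pfmP M m n hm hn]
  have h1 : pfmP M m n ∈ Submodule.span ℂ (Set.range (monoPfam M)) := by
    apply Submodule.sum_mem
    intro i hi
    simp only [Finset.mem_range] at hi
    have ha := an_le n
    have hb := bn_le n
    rw [smul_monoPfam M _ _ (by omega) (by omega)]
    exact Submodule.smul_mem _ _ (Submodule.subset_span ⟨_, rfl⟩)
  have h2 : Submodule.map (evalP M) (Submodule.span ℂ (Set.range (monoPfam M)))
      = Submodule.span ℂ (Set.range (mono M)) := by
    rw [Submodule.map_span, ← Set.range_comp]
    congr 1
    exact congrArg _ (funext fun jk => evalP_monoPfam M jk)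
  exact h2 ▸ Submodule.mem_map_of_mem h1

/-! ### Coefficient extraction and independence -/

noncomputable def Xi (j k : ℕ) : Polynomial (Polynomial ℂ) →ₗ[ℂ] ℂ where
  toFun p := (p.coeff j).coeff k
  map_add' p r := by simp
  map_smul' c p := by simp [Polynomial.coeff_smul]

lemma Xi_monomial (j k j' k' : ℕ) (s : ℂ) :
    Xi j k (Polynomial.monomial j' (Polynomial.monomial k' s))
      = if j' = j ∧ k' = k then s else 0 := by
  simp only [Xi, LinearMap.coe_mk, AddHom.coe_mk, Polynomial.coeff_monomial]
  split_ifs with h1 h2 h3 <;> simp_all [Polynomial.coeff_monomial]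

lemma Xi_pfmP (M m : ℕ) (n : ℤ) (hm : m ≤ M) (hn : n.natAbs ≤ m) (n₀ : ℤ) (i : ℕ) :
    Xi (i + an n₀) (i + bn n₀) (pfmP M m n)
      = if n = n₀ then (-1 : ℂ) ^ n * (gpoly M m n).coeff i else 0 := by
  rw [pfmP, map_sum]
  simp only [Xi_monomial]
  by_cases h : n = n₀
  · subst h
    have hcond : ∀ i' : ℕ, (i' + an n = i + an n ∧ i' + bn n = i + bn n) ↔ i' = i := by
      intro i'; omega
    simp only [hcond]
    rw [Finset.sum_ite_eq' (Finset.range (M - n.natAbs + 1))]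
    by_cases hi : i ∈ Finset.range (M - n.natAbs + 1)
    · simp only [hi, if_true]
    · simp only [hi, if_false]
      rw [gpoly_coeff_zero M m n hm hn (by simpa [Finset.mem_range] using hi), mul_zero]
      simp
  · rw [if_neg h]
    apply Finset.sum_eq_zero
    intro i' _
    rw [if_neg]
    rintro ⟨h1, h2⟩
    simp only [an_eq, bn_eq] at h1 h2
    apply h
    omega

/-- `Fin (2*m+1) ≃ {n : ℤ // n.natAbs ≤ m}` -/
def eqN (m : ℕ) : Fin (2 * m + 1) ≃ {n : ℤ // n.natAbs ≤ m} where
  toFun i := ⟨(i : ℤ) - m, by have := i.isLt; omega⟩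
  invFun n := ⟨(n.1 + m).toNat, by have := n.2; omega⟩
  left_inv i := Fin.ext (by
    show ((i : ℤ) - (m : ℤ) + (m : ℤ)).toNat = (i : ℕ)
    have := i.isLt; omega)
  right_inv n := Subtype.ext (by
    show ((((n.1 + (m : ℤ)).toNat : ℕ) : ℤ)) - (m : ℤ) = n.1
    have := n.2; omega)

noncomputable instance (m : ℕ) : Fintype {n : ℤ // n.natAbs ≤ m} :=
  Fintype.ofEquiv _ (eqN m)

lemma cardN (m : ℕ) : Fintype.card {n : ℤ // n.natAbs ≤ m} = 2 * m + 1 := by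
  rw [← Fintype.card_congr (eqN m), Fintype.card_fin]

abbrev J (M : ℕ) := Σ m : Fin (M + 1), {n : ℤ // n.natAbs ≤ (m : ℕ)}

lemma cardJ (M : ℕ) : Fintype.card (J M) = (M + 1) ^ 2 := by
  rw [Fintype.card_sigma]
  simp only [cardN]
  rw [Fin.sum_univ_eq_sum_range (fun m => 2 * m + 1) (M + 1)]
  induction M with
  | zero => simp
  | succ k ih => rw [Finset.sum_range_succ, ih]; ring

lemma pfmP_indep (M : ℕ) :
    LinearIndependent ℂ (fun x : J M => pfmP M (x.1 : ℕ) x.2.1) := by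
  rw [Fintype.linearIndependent_iff]
  intro g hg x₀
  obtain ⟨m₀, n₀⟩ := x₀
  set d : ℕ → ℂ := fun m =>
    if h : m < M + 1 ∧ (n₀ : ℤ).natAbs ≤ m then g ⟨⟨m, h.1⟩, ⟨n₀, h.2⟩⟩ else 0 with hd
  have hdpos : ∀ (m : ℕ) (h1 : m < M + 1) (h2 : ((n₀ : ℤ)).natAbs ≤ m),
      d m = g ⟨⟨m, h1⟩, ⟨↑n₀, h2⟩⟩ := fun m h1 h2 => dif_pos ⟨h1, h2⟩
  have hdneg : ∀ m : ℕ, ¬(m < M + 1 ∧ ((n₀ : ℤ)).natAbs ≤ m) → d m = 0 :=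
    fun m h => dif_neg h
  have neg1 : ((-1 : ℂ) ^ (n₀ : ℤ)) ≠ 0 := zpow_ne_zero _ (by norm_num)
  have main : ∀ i, ∑ m ∈ Finset.range (M + 1), d m * (gpoly M m ↑n₀).coeff i = 0 := by
    intro i
    have h0 := congrArg (fun f => Xi (i + an n₀) (i + bn n₀) f) hg
    simp only [map_sum, map_smul, map_zero, smul_eq_mul] at h0
    have h1 : ∀ x : J M, g x * Xi (i + an ↑n₀) (i + bn ↑n₀) (pfmP M (x.1 : ℕ) x.2.1)
        = g x * (if (x.2.1 : ℤ) = ↑n₀ then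
            (-1 : ℂ) ^ (n₀ : ℤ) * (gpoly M (x.1 : ℕ) ↑n₀).coeff i else 0) := by
      intro x
      rw [Xi_pfmP M (x.1 : ℕ) x.2.1 (by omega) x.2.2]
      by_cases h : (x.2.1 : ℤ) = ↑n₀
      · rw [if_pos h, if_pos h, h]
      · rw [if_neg h, if_neg h]
    rw [Finset.sum_congr rfl (fun x _ => h1 x)] at h0
    rw [← Finset.univ_sigma_univ, Finset.sum_sigma] at h0
    have h2 : ∀ m : Fin (M + 1),
        (∑ nn : {n : ℤ // n.natAbs ≤ (m : ℕ)}, g ⟨m, nn⟩ *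
          (if (nn.1 : ℤ) = ↑n₀ then
            (-1 : ℂ) ^ (n₀ : ℤ) * (gpoly M (m : ℕ) ↑n₀).coeff i else 0))
        = d m * ((-1 : ℂ) ^ (n₀ : ℤ) * (gpoly M (m : ℕ) ↑n₀).coeff i) := by
      intro m
      by_cases hc : ((n₀ : ℤ)).natAbs ≤ (m : ℕ)
      · rw [Finset.sum_eq_single_of_mem (⟨↑n₀, hc⟩ : {n : ℤ // n.natAbs ≤ (m : ℕ)})
          (Finset.mem_univ _)]
        · rw [if_pos rfl, hdpos (m : ℕ) m.isLt hc]
        · intro b _ hbne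
          rw [if_neg, mul_zero]
          intro hb
          exact hbne (Subtype.ext hb)
      · have hz : d (m : ℕ) = 0 := hdneg _ (by omega)
        rw [hz, zero_mul]
        apply Finset.sum_eq_zero
        intro b _
        rw [if_neg, mul_zero]
        intro hb
        exact hc (hb ▸ b.2)
    rw [Finset.sum_congr rfl (fun m _ => h2 m)] at h0
    have h3 : ∑ m : Fin (M + 1), d (m : ℕ) * ((-1 : ℂ) ^ (n₀ : ℤ) * (gpoly M (m : ℕ) ↑n₀).coeff i)
        = ∑ m ∈ Finset.range (M + 1), d m * ((-1 : ℂ) ^ (n₀ : ℤ) * (gpoly M m ↑n₀).coeff i) :=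
      Fin.sum_univ_eq_sum_range
        (fun m => d m * ((-1 : ℂ) ^ (n₀ : ℤ) * (gpoly M m ↑n₀).coeff i)) (M + 1)
    rw [h3] at h0
    have h4 : ∑ m ∈ Finset.range (M + 1), d m * ((-1 : ℂ) ^ (n₀ : ℤ) * (gpoly M m ↑n₀).coeff i)
        = ((-1 : ℂ) ^ (n₀ : ℤ)) * ∑ m ∈ Finset.range (M + 1), d m * (gpoly M m ↑n₀).coeff i := by
      rw [Finset.mul_sum]; apply Finset.sum_congr rfl; intro m _; ring
    rw [h4] at h0
    exact (mul_eq_zero.mp h0).resolve_left neg1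
  have hSV : ∀ m, m ≤ M → d m = 0 :=
    SV M (↑n₀) d (fun m h => hdneg m (by omega)) main
  have hfin := hSV (m₀ : ℕ) (by omega)
  rw [hdpos (m₀ : ℕ) m₀.isLt n₀.2] at hfin
  exact hfin

/-! ### `iSupIndep` from a linearly independent sigma-indexed family -/

lemma iSupIndep_span_sigma {ι : Type*} {κ : ι → Type*} {V : Type*} [AddCommGroup V]
    [Module ℂ V] {v : (Σ i, κ i) → V} (hv : LinearIndependent ℂ v)
    {p : ι → Submodule ℂ V}
    (hp : ∀ i, p i = Submodule.span ℂ (Set.range (fun j : κ i => v ⟨i, j⟩))) :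
    iSupIndep p := by
  have hpe : p = fun i => Submodule.span ℂ (Set.range (fun j : κ i => v ⟨i, j⟩)) :=
    funext hp
  subst hpe
  rw [iSupIndep_def]
  intro i
  have h1 : Set.range (fun j : κ i => v ⟨i, j⟩) = v '' {x : Σ i, κ i | x.1 = i} := by
    ext y
    constructor
    · rintro ⟨j, rfl⟩; exact ⟨⟨i, j⟩, rfl, rfl⟩
    · rintro ⟨⟨i', j⟩, hi, rfl⟩
      simp only [Set.mem_setOf_eq] at hi
      subst hi
      exact ⟨j, rfl⟩
  have h2 : (⨆ j, ⨆ (_ : j ≠ i), Submodule.span ℂ (Set.range (fun k : κ j => v ⟨j, k⟩)))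
      ≤ Submodule.span ℂ (v '' {x : Σ i, κ i | x.1 ≠ i}) := by
    apply iSup_le; intro j; apply iSup_le; intro hj
    apply Submodule.span_le.mpr
    rintro y ⟨k, rfl⟩
    exact Submodule.subset_span ⟨⟨j, k⟩, hj, rfl⟩
  rw [h1]
  refine Disjoint.mono_right h2 (hv.disjoint_span_image ?_)
  rw [Set.disjoint_left]
  rintro x hx1 hx2
  exact hx2 hx1

lemma range_eq (M : ℕ) :
    Set.range (fun q : {q : ℕ × ℤ // q.1 ≤ M ∧ q.2.natAbs ≤ q.1} => PFM q.1.1 q.1.2)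
      = Set.range (fun x : J M => PFM (x.1 : ℕ) x.2.1) := by
  ext f
  simp only [Set.mem_range]
  constructor
  · rintro ⟨⟨⟨m, n⟩, hm, hn⟩, rfl⟩
    exact ⟨⟨⟨m, by omega⟩, ⟨n, hn⟩⟩, rfl⟩
  · rintro ⟨⟨m, n⟩, rfl⟩
    exact ⟨⟨⟨(m : ℕ), (n : ℤ)⟩, by omega, n.2⟩, rfl⟩

end Stmt19Aux

set_option maxHeartbeats 1000000

open Stmt19Aux

/-- `V = span{z^j w^k (1-zw)^{-M}}` has dimension `(M+1)²`, equals the span of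
the Poisson Fourier modes `P_n^{-m}` with `m ≤ M`, `|n| ≤ m`, and the latter is
a direct sum over `m = 0, …, M` of the `(2m+1)`-dimensional `Δ_{zw}`-eigenspace
blocks with eigenvalue `4m(m+1)`. -/
theorem stmt19 (M : ℕ) :
    Module.finrank ℂ ↥(Submodule.span ℂ (Set.range (mono M))) = (M + 1) ^ 2
    ∧ Submodule.span ℂ (Set.range (mono M))
        = Submodule.span ℂ
            (Set.range (fun q : {q : ℕ × ℤ // q.1 ≤ M ∧ q.2.natAbs ≤ q.1} =>
              PFM q.1.1 q.1.2))
    ∧ iSupIndep (fun m : Fin (M + 1) =>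
        Submodule.span ℂ
          (Set.range (fun n : {n : ℤ // n.natAbs ≤ (m : ℕ)} => PFM (m : ℕ) n.1)))
    ∧ ∀ m : Fin (M + 1),
        Module.finrank ℂ
          ↥(Submodule.span ℂ
            (Set.range (fun n : {n : ℤ // n.natAbs ≤ (m : ℕ)} => PFM (m : ℕ) n.1)))
          = 2 * (m : ℕ) + 1 := by
  classical
  have hind : LinearIndependent ℂ (fun x : J M => PFM (x.1 : ℕ) x.2.1) := by
    have h1 := (pfmP_indep M).map' (evalP M) (evalP_inj M)
    have h2 : (⇑(evalP M) ∘ fun x : J M => pfmP M (x.1 : ℕ) x.2.1)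
        = fun x : J M => PFM (x.1 : ℕ) x.2.1 := by
      funext x
      exact evalP_pfmP M _ _ (by omega) x.2.2
    rwa [h2] at h1
  have hrank : Module.finrank ℂ
      ↥(Submodule.span ℂ (Set.range (fun x : J M => PFM (x.1 : ℕ) x.2.1))) = (M + 1) ^ 2 := by
    rw [finrank_span_eq_card hind, cardJ]
  have hle : Submodule.span ℂ (Set.range (fun x : J M => PFM (x.1 : ℕ) x.2.1))
      ≤ Submodule.span ℂ (Set.range (mono M)) := by
    apply Submodule.span_le.mpr
    rintro f ⟨x, rfl⟩
    exact pfm_mem_span M (x.1 : ℕ) x.2.1 (by omega) x.2.2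
  have hfd : FiniteDimensional ℂ ↥(Submodule.span ℂ (Set.range (mono M))) :=
    FiniteDimensional.span_of_finite ℂ (Set.finite_range _)
  have hmono_le : Module.finrank ℂ ↥(Submodule.span ℂ (Set.range (mono M))) ≤ (M + 1) ^ 2 := by
    refine le_trans (finrank_span_le_card (Set.range (mono M))) ?_
    rw [Set.toFinset_range]
    refine le_trans Finset.card_image_le ?_
    simp [Finset.card_univ, pow_two]
  have heq : Submodule.span ℂ (Set.range (fun x : J M => PFM (x.1 : ℕ) x.2.1))
      = Submodule.span ℂ (Set.range (mono M)) :=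
    Submodule.eq_of_le_of_finrank_le hle (by rw [hrank]; exact hmono_le)
  refine ⟨?_, ?_, ?_, ?_⟩
  · rw [← heq, hrank]
  · rw [range_eq M, heq]
  · exact iSupIndep_span_sigma hind (fun m => rfl)
  · intro m
    have hcomp := hind.comp
      (fun n : {n : ℤ // n.natAbs ≤ (m : ℕ)} => (⟨m, n⟩ : J M)) (sigma_mk_injective
        (β := fun m : Fin (M + 1) => {n : ℤ // n.natAbs ≤ (m : ℕ)}) (i := m))
    have hcomp2 : LinearIndependent ℂ
        (fun n : {n : ℤ // n.natAbs ≤ (m : ℕ)} => PFM (m : ℕ) n.1) := hcomp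
    rw [finrank_span_eq_card hcomp2, cardN]
end
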